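/- A probability distribution μ on the finite state space of a Markov chain is stationary if and only if (i) the support of μ contains only essential (recurrent) states, and (ii) for all states x and y, μ(x)·Pˣ(τ⁺_y < τ⁺_x) = μ(y)·Pʸ(τ⁺_x < τ⁺_y), where τ⁺_z denotes the first positive hitting time of z. -/

import Mathlib

/-- The probability of a path, as a product of transition probabilities. -/
def pathProb {S : Type*} (p : S → S → ℝ) : List S → ℝ
  | [] => 1
  | [_] => 1
  | a :: b :: l => p a b * pathProb p (b :: l)

/-- `γ` is a trajectory witnessing `τ⁺_y < τ⁺_x` when started at `x`:
it starts at `x`, ends at `y`, has positive length, and its intermediate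
states avoid both `x` and `y`. -/
def FirstHitPath {S : Type*} (x y : S) (γ : List S) : Prop :=
  γ.head? = some x ∧ γ.getLast? = some y ∧ 2 ≤ γ.length ∧
    ∀ z ∈ (γ.drop 1).dropLast, z ≠ x ∧ z ≠ y

/-- `Pˣ(τ⁺_y < τ⁺_x)` : the probability, starting from `x`, of hitting `y`
at a positive time before returning to `x`. -/
noncomputable def hitBeforeReturn {S : Type*} (p : S → S → ℝ) (x y : S) : ℝ :=
  ∑' γ : {γ : List S // FirstHitPath x y γ}, pathProb p γ.1

/-- Reachability in the directed graph with an arc `(a,b)` when `p a b > 0`. -/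
def Reaches {S : Type*} (p : S → S → ℝ) : S → S → Prop :=
  Relation.ReflTransGen (fun a b => 0 < p a b)

/-- A state is essential (recurrent) if it lies in a sink strongly connected
component of the transition graph. -/
def EssentialState {S : Type*} (p : S → S → ℝ) (x : S) : Prop :=
  ∀ y, Reaches p x y → Reaches p y x

set_option linter.unusedSectionVars false
set_option linter.unusedVariables false
set_option maxHeartbeats 1000000

namespace MCaux

variable {S : Type*} (p : S → S → ℝ)

lemma pathProb_nonneg (hp : ∀ x y, 0 ≤ p x y) : ∀ γ : List S, 0 ≤ pathProb p γ
  | [] => zero_le_one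
  | [_] => zero_le_one
  | a :: b :: l => mul_nonneg (hp a b) (pathProb_nonneg hp (b :: l))

lemma pathProb_cons {γ : List S} {w : S} (z : S) (hd : γ.head? = some w) :
    pathProb p (z :: γ) = p z w * pathProb p γ := by
  cases γ with
  | nil => simp at hd
  | cons b l => simp only [List.head?_cons, Option.some.injEq] at hd; subst hd; rfl

lemma head?_of_prefix {c : S} {t δ : List S} (h : c :: t <+: δ) : δ.head? = some c := by
  obtain ⟨r, rfl⟩ := h; simp

lemma getElem_mem_interior (l : List S) (i : ℕ) (h1 : 1 ≤ i) (h2 : i < l.length - 1) :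
    l[i]'(by omega) ∈ (l.drop 1).dropLast := by
  have hlen : (l.drop 1).dropLast.length = l.length - 1 - 1 := by simp
  have hi : i - 1 < (l.drop 1).dropLast.length := by omega
  have : (l.drop 1).dropLast[i-1]'(hi) = l[i]'(by omega) := by
    rw [List.getElem_dropLast, List.getElem_drop]
    congr 1; omega
  rw [← this]
  exact List.getElem_mem _

/-- The family of paths from `z` that end in `A` and avoid `A` strictly in between. -/
def famU (A : Set S) (z : S) : Set (List S) :=
  {γ | γ.head? = some z ∧ 2 ≤ γ.length ∧ (∀ a ∈ (γ.drop 1).dropLast, a ∉ A) ∧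
    ∃ t ∈ A, γ.getLast? = some t}

/-- Paths from `z` to `t`, avoiding `A` strictly in between. -/
def fam (A : Set S) (z t : S) : Set (List S) :=
  {γ | γ.head? = some z ∧ γ.getLast? = some t ∧ 2 ≤ γ.length ∧
    ∀ a ∈ (γ.drop 1).dropLast, a ∉ A}

lemma fam_subset_famU {A : Set S} {z t : S} (ht : t ∈ A) : fam A z t ⊆ famU A z := by
  rintro γ ⟨h1, h2, h3, h4⟩
  exact ⟨h1, h3, h4, t, ht, h2⟩

lemma famU_prefix_free {A : Set S} {z : S} {γ₁ γ₂ : List S}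
    (h1 : γ₁ ∈ famU A z) (h2 : γ₂ ∈ famU A z) (hpre : γ₁ <+: γ₂) : γ₁ = γ₂ := by
  by_contra hne
  have hlt : γ₁.length < γ₂.length :=
    lt_of_le_of_ne hpre.length_le fun h => hne (hpre.eq_of_length h)
  obtain ⟨hh1, hl1, hint1, t, htA, hlast1⟩ := h1
  obtain ⟨hh2, hl2, hint2, -⟩ := h2
  have hne1 : γ₁ ≠ [] := by intro h; subst h; simp at hl1
  have hk : γ₁.length - 1 < γ₁.length := by omega
  have ht' : t = γ₁[γ₁.length - 1]'hk := by
    rw [List.getLast?_eq_getLast_of_ne_nil hne1, Option.some_inj] at hlast1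
    rw [← hlast1, List.getLast_eq_getElem]
  have heq : γ₂[γ₁.length - 1]'(by omega) = γ₁[γ₁.length - 1]'hk := (hpre.getElem hk).symm
  have hmem := getElem_mem_interior γ₂ (γ₁.length - 1) (by omega) (by omega)
  exact (hint2 _ hmem) (by rw [← heq] at ht'; rw [← ht'] at hmem ⊢; exact htA)

variable [Fintype S] [DecidableEq S]

def pathsFin : ℕ → S → Finset (List S)
  | 0, z => {[z]}
  | n+1, z => Finset.univ.biUnion fun w => (pathsFin n w).image (List.cons z)

lemma mem_pathsFin : ∀ {n : ℕ} {z : S} {γ : List S}, γ ∈ pathsFin n z →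
    γ.head? = some z ∧ γ.length = n + 1
  | 0, z, γ, h => by
    simp only [pathsFin, Finset.mem_singleton] at h; subst h; simp
  | n+1, z, γ, h => by
    simp only [pathsFin, Finset.mem_biUnion, Finset.mem_image] at h
    obtain ⟨w, -, δ, hδ, rfl⟩ := h
    have := mem_pathsFin hδ
    simp [this.2]

lemma pathsFin_disj {n : ℕ} (z : S) :
    ∀ w₁ ∈ (Finset.univ : Finset S), ∀ w₂ ∈ Finset.univ, w₁ ≠ w₂ →
      Disjoint ((pathsFin n w₁).image (List.cons z)) ((pathsFin n w₂).image (List.cons z)) := by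
  rintro w₁ - w₂ - hne
  rw [Finset.disjoint_left]
  rintro γ h1 h2
  simp only [Finset.mem_image] at h1 h2
  obtain ⟨δ₁, hδ₁, rfl⟩ := h1
  obtain ⟨δ₂, hδ₂, heq⟩ := h2
  have h2' := (List.cons_injective (a := z)).eq_iff.mp heq.symm
  subst h2'
  exact hne (Option.some_injective _ ((mem_pathsFin hδ₁).1.symm.trans (mem_pathsFin hδ₂).1))

lemma sum_pathsFin (hrow : ∀ x, ∑ y, p x y = 1) :
    ∀ (n : ℕ) (z : S), ∑ γ ∈ pathsFin n z, pathProb p γ = 1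
  | 0, z => by simp [pathsFin, pathProb]
  | n+1, z => by
    rw [pathsFin, Finset.sum_biUnion (pathsFin_disj z)]
    rw [← hrow z]
    refine Finset.sum_congr rfl fun w _ => ?_
    rw [Finset.sum_image (fun a _ b _ h => List.cons_injective h)]
    have : ∀ δ ∈ pathsFin n w, pathProb p (z :: δ) = p z w * pathProb p δ := fun δ hδ =>
      pathProb_cons p z (mem_pathsFin hδ).1
    rw [Finset.sum_congr rfl this, ← Finset.mul_sum, sum_pathsFin hrow n w, mul_one]

lemma sum_ext (hrow : ∀ x, ∑ y, p x y = 1) :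
    ∀ (n : ℕ) (z : S) (γ : List S), γ.head? = some z → γ.length ≤ n + 1 →
      ∑ δ ∈ (pathsFin n z).filter (γ <+: ·), pathProb p δ = pathProb p γ
  | 0, z, γ, hh, hlen => by
    have : γ = [z] := by
      cases γ with
      | nil => simp at hh
      | cons a l =>
        obtain rfl : a = z := by simpa using hh
        have : l = [] := by
          cases l with
          | nil => rfl
          | cons b m => simp at hlen
        rw [this]
    subst this
    simp [pathsFin, Finset.filter_singleton, List.prefix_refl, pathProb]
  | n+1, z, γ, hh, hlen => by
    obtain ⟨l, rfl⟩ : ∃ l, γ = z :: l := by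
      cases γ with
      | nil => simp at hh
      | cons a l => exact ⟨l, by rw [show a = z by simpa using hh]⟩
    cases l with
      | nil =>
        -- γ = [z] : every path in pathsFin (n+1) z has [z] as prefix
        have hall : (pathsFin (n+1) z).filter ([z] <+: ·) = pathsFin (n+1) z := by
          refine Finset.filter_true_of_mem fun δ hδ => ?_
          have hh := (mem_pathsFin hδ).1
          cases δ with
          | nil => simp at hh
          | cons a t =>
            simp only [List.head?_cons, Option.some.injEq] at hh
            subst hh
            exact ⟨t, rfl⟩
        rw [hall, sum_pathsFin p hrow]
        rfl
      | cons c t =>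
        have hstep : ∑ δ ∈ (pathsFin (n+1) z).filter ((z :: c :: t) <+: ·), pathProb p δ
            = ∑ w : S, ∑ δ' ∈ pathsFin n w,
                if c :: t <+: δ' then p z w * pathProb p δ' else 0 := by
          rw [Finset.sum_filter, pathsFin, Finset.sum_biUnion (pathsFin_disj z)]
          refine Finset.sum_congr rfl fun w _ => ?_
          rw [Finset.sum_image (fun a _ b _ h => List.cons_injective h)]
          refine Finset.sum_congr rfl fun δ' hδ' => ?_
          simp only [List.cons_prefix_cons, true_and]
          by_cases hc : c :: t <+: δ'
          · rw [if_pos hc, if_pos hc, pathProb_cons p z (mem_pathsFin hδ').1]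
          · rw [if_neg hc, if_neg hc]
        rw [hstep, Finset.sum_eq_single c]
        · have : ∀ δ' ∈ pathsFin n c, (if c :: t <+: δ' then p z c * pathProb p δ' else 0)
              = p z c * (if c :: t <+: δ' then pathProb p δ' else 0) := by
            intro δ' _
            by_cases hc : c :: t <+: δ' <;> simp [hc]
          rw [Finset.sum_congr rfl this, ← Finset.mul_sum, ← Finset.sum_filter,
            sum_ext hrow n c (c :: t) rfl (by simpa using Nat.succ_le_succ_iff.mp hlen)]
          rfl
        · intro w _ hw
          refine Finset.sum_eq_zero fun δ' hδ' => ?_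
          rw [if_neg]
          intro hc
          have := (head?_of_prefix hc).symm.trans (mem_pathsFin hδ').1
          exact hw (Option.some_injective _ this).symm
        · intro h
          exact absurd (Finset.mem_univ c) h

section Summability

lemma sum_indicator_famU_le_one (hp : ∀ x y, 0 ≤ p x y) (hrow : ∀ x, ∑ y, p x y = 1)
    (A : Set S) (z : S) (Γ : Finset (List S)) :
    ∑ γ ∈ Γ, (famU A z).indicator (pathProb p) γ ≤ 1 := by
  classical
  rw [Finset.sum_indicator_eq_sum_filter]
  set Γ' := Γ.filter (fun γ => γ ∈ famU A z) with hΓ'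
  have hmem : ∀ γ ∈ Γ', γ ∈ famU A z := fun γ hγ => (Finset.mem_filter.mp hγ).2
  set N := Γ'.sup List.length with hN
  have key : ∀ γ ∈ Γ', ∑ δ ∈ (pathsFin N z).filter (γ <+: ·), pathProb p δ = pathProb p γ := by
    intro γ hγ
    refine sum_ext p hrow N z γ (hmem γ hγ).1 ?_
    exact le_trans (Finset.le_sup (f := List.length) hγ) (Nat.le_succ N)
  have hdisj : (↑Γ' : Set (List S)).PairwiseDisjoint
      (fun γ => (pathsFin N z).filter (γ <+: ·)) := by
    intro γ₁ h1 γ₂ h2 hne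
    rw [Function.onFun, Finset.disjoint_left]
    intro δ hδ1 hδ2
    have p1 := (Finset.mem_filter.mp hδ1).2
    have p2 := (Finset.mem_filter.mp hδ2).2
    rcases List.prefix_or_prefix_of_prefix p1 p2 with h | h
    · exact hne (famU_prefix_free (hmem _ (by exact_mod_cast h1)) (hmem _ (by exact_mod_cast h2)) h)
    · exact hne ((famU_prefix_free (hmem _ (by exact_mod_cast h2)) (hmem _ (by exact_mod_cast h1)) h).symm)
  calc ∑ γ ∈ Γ', pathProb p γ
      = ∑ γ ∈ Γ', ∑ δ ∈ (pathsFin N z).filter (γ <+: ·), pathProb p δ :=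
        (Finset.sum_congr rfl key).symm
    _ = ∑ δ ∈ Γ'.biUnion (fun γ => (pathsFin N z).filter (γ <+: ·)), pathProb p δ :=
        (Finset.sum_biUnion hdisj).symm
    _ ≤ ∑ δ ∈ pathsFin N z, pathProb p δ :=
        Finset.sum_le_sum_of_subset_of_nonneg
          (Finset.biUnion_subset.mpr fun γ _ => Finset.filter_subset _ _)
          (fun δ _ _ => pathProb_nonneg p hp δ)
    _ = 1 := sum_pathsFin p hrow N z

lemma summable_indicator_famU (hp : ∀ x y, 0 ≤ p x y) (hrow : ∀ x, ∑ y, p x y = 1)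
    (A : Set S) (z : S) :
    Summable ((famU A z).indicator (pathProb p)) :=
  summable_of_sum_le (fun γ => Set.indicator_nonneg (fun a _ => pathProb_nonneg p hp a) γ)
    (sum_indicator_famU_le_one p hp hrow A z)

lemma tsum_indicator_famU_le_one (hp : ∀ x y, 0 ≤ p x y) (hrow : ∀ x, ∑ y, p x y = 1)
    (A : Set S) (z : S) :
    ∑' γ, (famU A z).indicator (pathProb p) γ ≤ 1 :=
  Summable.tsum_le_of_sum_le (summable_indicator_famU p hp hrow A z)
    (sum_indicator_famU_le_one p hp hrow A z)

lemma indicator_fam_le_indicator_famU (hp : ∀ x y, 0 ≤ p x y)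
    {A : Set S} {t : S} (ht : t ∈ A) (z : S) :
    (fam A z t).indicator (pathProb p) ≤ (famU A z).indicator (pathProb p) :=
  Set.indicator_le_indicator_of_subset (fam_subset_famU ht) (fun a => pathProb_nonneg p hp a)

lemma summable_indicator_fam (hp : ∀ x y, 0 ≤ p x y) (hrow : ∀ x, ∑ y, p x y = 1)
    {A : Set S} {t : S} (ht : t ∈ A) (z : S) :
    Summable ((fam A z t).indicator (pathProb p)) :=
  Summable.of_nonneg_of_le
    (fun γ => Set.indicator_nonneg (fun a _ => pathProb_nonneg p hp a) γ)
    (fun γ => indicator_fam_le_indicator_famU p hp ht z γ)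
    (summable_indicator_famU p hp hrow A z)

end Summability

section Decomp

/-- Probability of going from `z` to `t` along a path whose interior avoids `A`. -/
noncomputable def hs (A : Set S) (z t : S) : ℝ :=
  ∑' γ, (fam A z t).indicator (pathProb p) γ

lemma hs_nonneg (hp : ∀ x y, 0 ≤ p x y) (A : Set S) (z t : S) : 0 ≤ hs p A z t :=
  tsum_nonneg fun γ => Set.indicator_nonneg (fun a _ => pathProb_nonneg p hp a) γ

lemma tsum_comp_cons (w : S) (f : List S → ℝ) (hf : ∀ γ, f γ ≠ 0 → γ.head? = some w) :
    ∑' l, f (w :: l) = ∑' γ, f γ := by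
  apply Function.Injective.tsum_eq (List.cons_injective)
  intro γ hγ
  have hh := hf γ hγ
  cases γ with
  | nil => simp at hh
  | cons a l =>
    obtain rfl : a = w := by simpa using hh
    exact ⟨l, rfl⟩

lemma hs_step (hp : ∀ x y, 0 ≤ p x y) (hrow : ∀ x, ∑ y, p x y = 1)
    (x y : S) (hne : x ≠ y) (z : S) :
    hs p ({x, y} : Set S) z y
      = ∑ w, p z w * (if w = y then 1 else if w = x then 0
          else hs p ({x, y} : Set S) w y) := by
  classical
  set A : Set S := {x, y} with hA
  have hyA : y ∈ A := by simp [hA]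
  set f := (fam A z y).indicator (pathProb p) with hfdef
  have hsupp : ∀ γ, f γ ≠ 0 → ∃ w l, γ = z :: w :: l := by
    intro γ hγ
    have hmem : γ ∈ fam A z y := by
      by_contra h; exact hγ (Set.indicator_of_notMem h _)
    obtain ⟨hh, -, hlen, -⟩ := hmem
    cases γ with
    | nil => simp at hh
    | cons a l =>
      cases l with
      | nil => simp at hlen
      | cons b m =>
        obtain rfl : a = z := by simpa using hh
        exact ⟨b, m, rfl⟩
  have hinj : Function.Injective (fun pr : S × List S => z :: pr.1 :: pr.2) := by
    rintro ⟨a1, l1⟩ ⟨a2, l2⟩ h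
    simp only [List.cons.injEq] at h
    exact Prod.ext h.2.1 h.2.2
  have hrange : Function.support f ⊆ Set.range (fun pr : S × List S => z :: pr.1 :: pr.2) := by
    intro γ hγ
    obtain ⟨w, l, rfl⟩ := hsupp γ hγ
    exact ⟨(w, l), rfl⟩
  have hsum : Summable f := summable_indicator_fam p hp hrow hyA z
  have h1 : ∑' (pr : S × List S), f (z :: pr.1 :: pr.2) = ∑' γ, f γ := hinj.tsum_eq hrange
  have hsum2 : Summable (fun pr : S × List S => f (z :: pr.1 :: pr.2)) :=
    (hinj.summable_iff fun γ hγ =>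
      Function.notMem_support.mp fun h => hγ (hrange h)).2 hsum
  have h2 : ∑' (pr : S × List S), f (z :: pr.1 :: pr.2) = ∑ w, ∑' l, f (z :: w :: l) := by
    rw [Summable.tsum_prod hsum2, tsum_fintype]
  have hterm : ∀ w, ∑' l, f (z :: w :: l)
      = p z w * (if w = y then 1 else if w = x then 0 else hs p A w y) := by
    intro w
    by_cases hwy : w = y
    · subst hwy
      rw [if_pos rfl, mul_one]
      have hfun : ∀ l, f (z :: w :: l) = if l = ([] : List S) then p z w else 0 := by
        intro l
        cases l with
        | nil =>
          rw [if_pos rfl, hfdef, Set.indicator_of_mem]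
          · show p z w * pathProb p [w] = p z w
            simp [pathProb]
          · refine ⟨rfl, by simp, by simp, ?_⟩
            intro a ha
            simp at ha
        | cons b m =>
          rw [if_neg (by simp), hfdef, Set.indicator_of_notMem]
          rintro ⟨-, -, -, hint⟩
          exact hint w (by simp) hyA
      rw [tsum_congr hfun, tsum_ite_eq]
    · by_cases hwx : w = x
      · subst hwx
        rw [if_neg hwy, if_pos rfl, mul_zero]
        have hfun : ∀ l, f (z :: w :: l) = 0 := by
          intro l
          cases l with
          | nil =>
            rw [hfdef, Set.indicator_of_notMem]
            rintro ⟨-, hlast, -, -⟩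
            simp only [List.getLast?_cons_cons, List.getLast?_singleton,
              Option.some.injEq] at hlast
            exact hne (hlast.symm ▸ rfl) |>.elim
          | cons b m =>
            rw [hfdef, Set.indicator_of_notMem]
            rintro ⟨-, -, -, hint⟩
            exact hint w (by simp) (by simp [hA])
        rw [tsum_congr hfun, tsum_zero]
      · rw [if_neg hwy, if_neg hwx]
        have hwA : w ∉ A := by simp [hA, hwy, hwx]
        have hfun : ∀ l, f (z :: w :: l)
            = p z w * (fam A w y).indicator (pathProb p) (w :: l) := by
          intro l
          cases l with
          | nil =>
            rw [hfdef, Set.indicator_of_notMem, Set.indicator_of_notMem, mul_zero]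
            · rintro ⟨-, -, hlen, -⟩; simp at hlen
            · rintro ⟨-, hlast, -, -⟩
              simp only [List.getLast?_cons_cons, List.getLast?_singleton,
                Option.some.injEq] at hlast
              exact hwy hlast
          | cons b m =>
            by_cases hm : (w :: b :: m) ∈ fam A w y
            · rw [hfdef, Set.indicator_of_mem hm, Set.indicator_of_mem]
              · rfl
              · obtain ⟨-, hlast, -, hint⟩ := hm
                refine ⟨rfl, by rwa [List.getLast?_cons_cons], by simp, ?_⟩
                intro a ha
                simp only [List.drop_succ_cons, List.drop_zero] at ha
                rw [List.dropLast_cons₂] at ha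
                rcases List.mem_cons.mp ha with rfl | ha
                · exact hwA
                · exact hint a (by simpa using ha)
            · rw [hfdef, Set.indicator_of_notMem hm, Set.indicator_of_notMem, mul_zero]
              rintro ⟨-, hlast, -, hint⟩
              refine hm ⟨rfl, by rwa [List.getLast?_cons_cons] at hlast, by simp, ?_⟩
              intro a ha
              refine hint a ?_
              simp only [List.drop_succ_cons, List.drop_zero] at ha ⊢
              rw [List.dropLast_cons₂]
              exact List.mem_cons_of_mem _ ha
        rw [tsum_congr hfun, tsum_mul_left]
        congr 1
        show ∑' l, (fam A w y).indicator (pathProb p) (w :: l) = hs p A w y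
        rw [hs]
        apply tsum_comp_cons
        intro γ hγ
        have hmem : γ ∈ fam A w y := by
          by_contra h; exact hγ (Set.indicator_of_notMem h _)
        exact hmem.1
  rw [hs, ← h1, h2, Finset.sum_congr rfl fun w _ => hterm w]

end Decomp

section Balance

lemma hs_pair_le_one (hp : ∀ x y, 0 ≤ p x y) (hrow : ∀ x, ∑ y, p x y = 1) (x y : S) (hne : x ≠ y) (z : S) :
    hs p ({x, y} : Set S) z x + hs p ({x, y} : Set S) z y ≤ 1 := by
  classical
  set A : Set S := {x, y} with hA
  have hxA : x ∈ A := by simp [hA]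
  have hyA : y ∈ A := by simp [hA]
  have hnn : ∀ (t : S) (γ : List S), 0 ≤ (fam A z t).indicator (pathProb p) γ :=
    fun t γ => Set.indicator_nonneg (fun a _ => pathProb_nonneg p hp a) γ
  have hpt : ∀ γ, (fam A z x).indicator (pathProb p) γ + (fam A z y).indicator (pathProb p) γ
      ≤ (famU A z).indicator (pathProb p) γ := by
    intro γ
    by_cases h1 : γ ∈ fam A z x
    · have h2 : γ ∉ fam A z y := by
        rintro ⟨-, hl2, -, -⟩
        obtain ⟨-, hl1, -, -⟩ := h1
        rw [hl1] at hl2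
        exact hne (Option.some_injective _ hl2)
      rw [Set.indicator_of_mem h1, Set.indicator_of_notMem h2, add_zero,
        Set.indicator_of_mem (fam_subset_famU hxA h1)]
    · rw [Set.indicator_of_notMem h1, zero_add]
      exact indicator_fam_le_indicator_famU p hp hyA z γ
  calc hs p A z x + hs p A z y
      = ∑' γ, ((fam A z x).indicator (pathProb p) γ + (fam A z y).indicator (pathProb p) γ) :=
        (Summable.tsum_add (summable_indicator_fam p hp hrow hxA z)
          (summable_indicator_fam p hp hrow hyA z)).symm
    _ ≤ ∑' γ, (famU A z).indicator (pathProb p) γ :=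
        Summable.tsum_le_tsum hpt
          ((summable_indicator_fam p hp hrow hxA z).add
            (summable_indicator_fam p hp hrow hyA z))
          (summable_indicator_famU p hp hrow A z)
    _ ≤ 1 := tsum_indicator_famU_le_one p hp hrow A z

lemma stationary_flow (hp : ∀ x y, 0 ≤ p x y) (hrow : ∀ x, ∑ y, p x y = 1) (μ : S → ℝ) (hstat : ∀ w, ∑ v, μ v * p v w = μ w)
    (x y : S) (hne : x ≠ y) :
    μ x * hs p ({x, y} : Set S) x y = μ y * (1 - hs p ({x, y} : Set S) y y) := by
  classical
  set A : Set S := {x, y} with hA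
  set G : S → ℝ := fun w => if w = y then 1 else if w = x then 0 else hs p A w y with hG
  have key : ∀ z, hs p A z y = ∑ w, p z w * G w := fun z => hs_step p hp hrow x y hne z
  have main : ∑ z, μ z * hs p A z y = ∑ w, μ w * G w := by
    calc ∑ z, μ z * hs p A z y = ∑ z, ∑ w, μ z * (p z w * G w) := by
          refine Finset.sum_congr rfl fun z _ => ?_
          rw [key z, Finset.mul_sum]
      _ = ∑ w, ∑ z, μ z * p z w * G w := by
          rw [Finset.sum_comm]
          exact Finset.sum_congr rfl fun w _ => Finset.sum_congr rfl fun z _ => by ring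
      _ = ∑ w, (∑ z, μ z * p z w) * G w := by
          refine Finset.sum_congr rfl fun w _ => ?_
          rw [Finset.sum_mul]
      _ = ∑ w, μ w * G w := by
          refine Finset.sum_congr rfl fun w _ => ?_
          rw [hstat w]
  have hzero : ∀ w ∈ Finset.univ, w ∉ ({x, y} : Finset S)
      → μ w * hs p A w y - μ w * G w = 0 := by
    intro w _ hw
    simp only [Finset.mem_insert, Finset.mem_singleton, not_or] at hw
    have : G w = hs p A w y := by rw [hG]; simp [hw.1, hw.2]
    rw [this, sub_self]
  have htot : ∑ w, (μ w * hs p A w y - μ w * G w) = 0 := by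
    rw [Finset.sum_sub_distrib, main, sub_self]
  have hpair : ∑ w ∈ ({x, y} : Finset S), (μ w * hs p A w y - μ w * G w) = 0 := by
    rw [Finset.sum_subset (Finset.subset_univ _) hzero, htot]
  rw [Finset.sum_pair hne] at hpair
  have hGx : G x = 0 := by rw [hG]; simp [hne]
  have hGy : G y = 1 := by rw [hG]; simp
  rw [hGx, hGy] at hpair
  ring_nf
  ring_nf at hpair
  linarith

lemma balance_of_stationary (hp : ∀ x y, 0 ≤ p x y) (hrow : ∀ x, ∑ y, p x y = 1) (μ : S → ℝ) (hμ0 : ∀ v, 0 ≤ μ v)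
    (hstat : ∀ w, ∑ v, μ v * p v w = μ w) (x y : S) :
    μ x * hs p ({x, y} : Set S) x y = μ y * hs p ({x, y} : Set S) y x := by
  rcases eq_or_ne x y with rfl | hne
  · rfl
  · have e1 := stationary_flow p hp hrow μ hstat x y hne
    have e2 := stationary_flow p hp hrow μ hstat y x hne.symm
    rw [Set.pair_comm y x] at e2
    have b1 := hs_pair_le_one p hp hrow x y hne y
    have b2 := hs_pair_le_one p hp hrow x y hne x
    have n1 := hs_nonneg p hp ({x, y} : Set S) y x
    have n2 := hs_nonneg p hp ({x, y} : Set S) x y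
    have h1 : μ y * hs p ({x, y} : Set S) y x ≤ μ x * hs p ({x, y} : Set S) x y := by
      rw [e1]
      exact mul_le_mul_of_nonneg_left (by linarith) (hμ0 y)
    have h2 : μ x * hs p ({x, y} : Set S) x y ≤ μ y * hs p ({x, y} : Set S) y x := by
      rw [e2]
      exact mul_le_mul_of_nonneg_left (by linarith) (hμ0 x)
    linarith

lemma hitBeforeReturn_eq_hs (x y : S) :
    hitBeforeReturn p x y = hs p ({x, y} : Set S) x y := by
  have hset : {γ : List S | FirstHitPath x y γ} = fam ({x, y} : Set S) x y := by
    ext γ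
    simp only [Set.mem_setOf_eq, FirstHitPath, fam, Set.mem_insert_iff,
      Set.mem_singleton_iff, not_or]
  have h0 : hitBeforeReturn p x y
      = ∑' γ : ↥{γ : List S | FirstHitPath x y γ}, pathProb p γ.1 := rfl
  rw [h0, hset, tsum_subtype, hs]

end Balance

section Essential

lemma pos_step (hp : ∀ x y, 0 ≤ p x y) (μ : S → ℝ) (hμ0 : ∀ v, 0 ≤ μ v)
    (hstat : ∀ w, ∑ v, μ v * p v w = μ w) {w b : S} (hw : 0 < μ w) (hb : 0 < p w b) :
    0 < μ b := by
  have h1 : μ w * p w b ≤ ∑ v, μ v * p v b :=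
    Finset.single_le_sum (fun v _ => mul_nonneg (hμ0 v) (hp v b)) (Finset.mem_univ w)
  rw [hstat b] at h1
  nlinarith

lemma pos_reaches (hp : ∀ x y, 0 ≤ p x y) (μ : S → ℝ) (hμ0 : ∀ v, 0 ≤ μ v)
    (hstat : ∀ w, ∑ v, μ v * p v w = μ w) {a b : S} (h : Reaches p a b) (ha : 0 < μ a) :
    0 < μ b := by
  induction h with
  | refl => exact ha
  | tail h1 hstep ih => exact pos_step p hp μ hμ0 hstat ih hstep

lemma flow (hp : ∀ x y, 0 ≤ p x y) (hrow : ∀ x, ∑ y, p x y = 1) (μ : S → ℝ)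
    (hμ0 : ∀ v, 0 ≤ μ v) (hstat : ∀ w, ∑ v, μ v * p v w = μ w) (x : S) {w : S}
    (hwC : Reaches p w x) (hw : 0 < μ w) {b : S} (hb : ¬ Reaches p b x) : p w b = 0 := by
  classical
  set Cf : Finset S := Finset.univ.filter (fun z => Reaches p z x) with hCf
  have hstep0 : ∀ z ∈ Cf, ∀ v, v ∉ Cf → p v z = 0 := by
    intro z hz v hv
    by_contra hpz
    have hpos : 0 < p v z := (hp v z).lt_of_ne (Ne.symm hpz)
    exact hv (Finset.mem_filter.mpr ⟨Finset.mem_univ v,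
      Relation.ReflTransGen.head hpos (Finset.mem_filter.mp hz).2⟩)
  have h1 : ∀ z ∈ Cf, μ z = ∑ v ∈ Cf, μ v * p v z := by
    intro z hz
    rw [← hstat z]
    exact (Finset.sum_subset (Finset.subset_univ _) fun v _ hv => by
      rw [hstep0 z hz v hv, mul_zero]).symm
  have hM : ∑ z ∈ Cf, μ z = ∑ v ∈ Cf, μ v * ∑ z ∈ Cf, p v z := by
    calc ∑ z ∈ Cf, μ z = ∑ z ∈ Cf, ∑ v ∈ Cf, μ v * p v z := Finset.sum_congr rfl h1
      _ = ∑ v ∈ Cf, ∑ z ∈ Cf, μ v * p v z := Finset.sum_comm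
      _ = ∑ v ∈ Cf, μ v * ∑ z ∈ Cf, p v z := by
          exact Finset.sum_congr rfl fun v _ => (Finset.mul_sum _ _ _).symm
  have hle : ∀ v ∈ Cf, μ v * ∑ z ∈ Cf, p v z ≤ μ v := by
    intro v _
    have h2 : ∑ z ∈ Cf, p v z ≤ 1 := by
      rw [← hrow v]
      exact Finset.sum_le_sum_of_subset_of_nonneg (Finset.subset_univ _)
        (fun z _ _ => hp v z)
    calc μ v * ∑ z ∈ Cf, p v z ≤ μ v * 1 := mul_le_mul_of_nonneg_left h2 (hμ0 v)
      _ = μ v := mul_one _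
  have heq := (Finset.sum_eq_sum_iff_of_le hle).mp hM.symm
  have hwCf : w ∈ Cf := Finset.mem_filter.mpr ⟨Finset.mem_univ w, hwC⟩
  have hw1 : μ w * ∑ z ∈ Cf, p w z = μ w := heq w hwCf
  have hsum1 : ∑ z ∈ Cf, p w z = 1 := by
    have := mul_left_cancel₀ (ne_of_gt hw) (by rw [hw1, mul_one] :
      μ w * ∑ z ∈ Cf, p w z = μ w * 1)
    exact this
  have hsplit : ∑ z ∈ Finset.univ \ Cf, p w z + ∑ z ∈ Cf, p w z = 1 := by
    rw [Finset.sum_sdiff (Finset.subset_univ _), hrow w]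
  have hzero : ∑ z ∈ Finset.univ \ Cf, p w z = 0 := by linarith
  have hbCf : b ∉ Cf := fun h => hb (Finset.mem_filter.mp h).2
  exact (Finset.sum_eq_zero_iff_of_nonneg fun z _ => hp w z).mp hzero b
    (Finset.mem_sdiff.mpr ⟨Finset.mem_univ b, hbCf⟩)

lemma essential_of_stationary (hp : ∀ x y, 0 ≤ p x y) (hrow : ∀ x, ∑ y, p x y = 1)
    (μ : S → ℝ) (hμ0 : ∀ v, 0 ≤ μ v) (hstat : ∀ w, ∑ v, μ v * p v w = μ w)
    (x : S) (hx : 0 < μ x) : EssentialState p x := by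
  intro y hxy
  have key : 0 < μ y ∧ Reaches p y x := by
    induction hxy with
    | refl => exact ⟨hx, Relation.ReflTransGen.refl⟩
    | tail h1 hstep ih =>
      obtain ⟨hb, hbx⟩ := ih
      refine ⟨pos_step p hp μ hμ0 hstat hb hstep, ?_⟩
      by_contra hc
      rw [flow p hp hrow μ hμ0 hstat x hbx hb hc] at hstep
      exact lt_irrefl 0 hstep
  exact key.2

end Essential

section Nodup

lemma exists_nodup_chain (r : S → S → Prop) :
    ∀ (n : ℕ) (l : List S), l.length ≤ n → ∀ (a : S), List.Chain r a l →
    ∃ m, List.Chain r a m ∧ (a :: m).getLast? = (a :: l).getLast? ∧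
      (a :: m).Nodup ∧ (a :: m) ⊆ (a :: l) := by
  intro n
  induction n with
  | zero =>
    intro l hl a hc
    have : l = [] := List.length_eq_zero_iff.mp (Nat.le_zero.mp hl)
    subst this
    exact ⟨[], List.Chain.nil, rfl, by simp, fun v hv => hv⟩
  | succ n ih =>
    intro l hl a hc
    by_cases hnd : (a :: l).Nodup
    · exact ⟨l, hc, rfl, hnd, fun v hv => hv⟩
    · by_cases hal : a ∈ l
      · obtain ⟨l₁, l₂, rfl⟩ := List.append_of_mem hal
        have hc2 : List.Chain r a l₂ := (List.isChain_cons_split.mp hc).2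
        have hlen2 : l₂.length ≤ n := by
          simp only [List.length_append, List.length_cons] at hl
          omega
        obtain ⟨m, hm1, hm2, hm3, hm4⟩ := ih l₂ hlen2 a hc2
        refine ⟨m, hm1, ?_, hm3, ?_⟩
        · rw [hm2]
          have hrw : a :: (l₁ ++ a :: l₂) = (a :: l₁) ++ (a :: l₂) := by simp
          rw [hrw, List.getLast?_append]
          have h2 : (a :: l₂).getLast? = some ((a :: l₂).getLast (by simp)) :=
            List.getLast?_eq_getLast_of_ne_nil _
          rw [h2]; rfl
        · intro v hv
          rcases List.mem_cons.mp (hm4 hv) with rfl | hv2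
          · exact List.mem_cons_self
          · exact List.mem_cons_of_mem _ (by simp [hv2])
      · cases l with
        | nil => simp at hnd
        | cons c l' =>
          have hac : r a c := (List.chain_cons.mp hc).1
          have hc' : List.Chain r c l' := (List.chain_cons.mp hc).2
          obtain ⟨m, hm1, hm2, hm3, hm4⟩ := ih l' (by simp only [List.length_cons] at hl; omega) c hc'
          refine ⟨c :: m, List.chain_cons.mpr ⟨hac, hm1⟩, ?_, ?_, ?_⟩
          · rw [List.getLast?_cons_cons, hm2, List.getLast?_cons_cons]
          · exact List.nodup_cons.mpr ⟨fun ha => hal (hm4 ha), hm3⟩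
          · intro v hv
            rcases List.mem_cons.mp hv with rfl | hv2
            · exact List.mem_cons_self
            · exact List.mem_cons_of_mem _ (hm4 hv2)

lemma pathProb_pos_of_chain : ∀ (m : List S) (a : S),
    List.Chain (fun u v => 0 < p u v) a m → 0 < pathProb p (a :: m)
  | [], a, _ => one_pos
  | b :: m', a, h =>
    mul_pos (List.chain_cons.mp h).1 (pathProb_pos_of_chain m' b (List.chain_cons.mp h).2)

lemma exists_firstHitPath (x y : S) (hne : x ≠ y) (hr : Reaches p x y) :
    ∃ γ, γ ∈ fam ({x, y} : Set S) x y ∧ 0 < pathProb p γ := by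
  obtain ⟨l, hl1, hl2⟩ := List.exists_isChain_cons_of_relationReflTransGen hr
  obtain ⟨m, hm1, hm2, hm3, -⟩ := exists_nodup_chain (fun u v => 0 < p u v) l.length l le_rfl x hl1
  have hlast : (x :: m).getLast? = some y := by
    rw [hm2, List.getLast?_eq_getLast_of_ne_nil (List.cons_ne_nil _ _), hl2]
  have hmne : m ≠ [] := by
    intro h
    subst h
    simp only [List.getLast?_singleton, Option.some.injEq] at hlast
    exact hne hlast
  have hxm : x ∉ m := (List.nodup_cons.mp hm3).1
  have hym : y = m.getLast hmne := by
    have : (x :: m).getLast (by simp) = m.getLast hmne := List.getLast_cons hmne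
    rw [List.getLast?_eq_getLast_of_ne_nil (List.cons_ne_nil _ _), this] at hlast
    exact (Option.some_injective _ hlast).symm
  have hynd : y ∉ m.dropLast := by
    intro hy
    have hsplit := List.dropLast_concat_getLast hmne
    have hnd : (m.dropLast ++ [m.getLast hmne]).Nodup := by
      rw [hsplit]; exact (List.nodup_cons.mp hm3).2
    have := (List.nodup_append.mp hnd).2.2
    exact this y hy _ (by simp) hym
  refine ⟨x :: m, ⟨rfl, hlast, ?_, ?_⟩, pathProb_pos_of_chain p m x hm1⟩
  · cases m with
    | nil => exact absurd rfl hmne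
    | cons b m' => simp
  · intro a ha
    simp only [List.drop_succ_cons, List.drop_zero] at ha
    simp only [Set.mem_insert_iff, Set.mem_singleton_iff, not_or]
    constructor
    · intro h; subst h; exact hxm (List.dropLast_subset _ ha)
    · intro h; subst h; exact hynd ha

end Nodup

lemma hs_pos (hp : ∀ x y, 0 ≤ p x y) (hrow : ∀ x, ∑ y, p x y = 1)
    (x y : S) (hne : x ≠ y) (hr : Reaches p x y) :
    0 < hs p ({x, y} : Set S) x y := by
  obtain ⟨γ, hγ, hpos⟩ := exists_firstHitPath p x y hne hr
  have hle : pathProb p γ ≤ hs p ({x, y} : Set S) x y := by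
    have h := Summable.le_tsum (summable_indicator_fam p hp hrow
      (show y ∈ ({x, y} : Set S) by simp) x) γ
      (fun j _ => Set.indicator_nonneg (fun a _ => pathProb_nonneg p hp a) j)
    rwa [Set.indicator_of_mem hγ] at h
  linarith

section Cesaro

noncomputable def statIter (z₀ : S) : ℕ → S → ℝ
  | 0 => fun w => if w = z₀ then 1 else 0
  | n+1 => fun w => ∑ v, statIter z₀ n v * p v w

lemma statIter_nonneg (hp : ∀ x y, 0 ≤ p x y) (z₀ : S) :
    ∀ (n : ℕ) (w : S), 0 ≤ statIter p z₀ n w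
  | 0, w => by dsimp [statIter]; split <;> norm_num
  | n+1, w => Finset.sum_nonneg fun v _ =>
      mul_nonneg (statIter_nonneg hp z₀ n v) (hp v w)

lemma statIter_sum (hrow : ∀ x, ∑ y, p x y = 1) (z₀ : S) :
    ∀ n : ℕ, ∑ w, statIter p z₀ n w = 1
  | 0 => by simp [statIter]
  | n+1 => by
    show ∑ w, ∑ v, statIter p z₀ n v * p v w = 1
    rw [Finset.sum_comm]
    calc ∑ v, ∑ w, statIter p z₀ n v * p v w
        = ∑ v, statIter p z₀ n v * ∑ w, p v w := by
          exact Finset.sum_congr rfl fun v _ => (Finset.mul_sum _ _ _).symm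
      _ = ∑ v, statIter p z₀ n v := by
          refine Finset.sum_congr rfl fun v _ => by rw [hrow v, mul_one]
      _ = 1 := statIter_sum hrow z₀ n

lemma statIter_le_one (hp : ∀ x y, 0 ≤ p x y) (hrow : ∀ x, ∑ y, p x y = 1) (z₀ : S)
    (n : ℕ) (w : S) : statIter p z₀ n w ≤ 1 := by
  have h := Finset.single_le_sum (f := fun v => statIter p z₀ n v)
    (fun v _ => statIter_nonneg p hp z₀ n v) (Finset.mem_univ w)
  rw [statIter_sum p hrow z₀ n] at h
  exact h

lemma statIter_reach (hp : ∀ x y, 0 ≤ p x y) (z₀ : S) :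
    ∀ (n : ℕ) (w : S), statIter p z₀ n w ≠ 0 → Reaches p z₀ w
  | 0, w, h => by
    dsimp [statIter] at h
    split at h
    · subst ‹w = z₀›; exact Relation.ReflTransGen.refl
    · exact absurd rfl h
  | n+1, w, h => by
    dsimp [statIter] at h
    obtain ⟨v, -, hv⟩ := Finset.exists_ne_zero_of_sum_ne_zero h
    have h1 : statIter p z₀ n v ≠ 0 := fun h0 => hv (by rw [h0, zero_mul])
    have h2 : 0 < p v w := (hp v w).lt_of_ne fun h0 => hv (by rw [← h0, mul_zero])
    exact Relation.ReflTransGen.tail (statIter_reach hp z₀ n v h1) h2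

noncomputable def ces (z₀ : S) (n : ℕ) : S → ℝ :=
  fun w => ((n : ℝ) + 1)⁻¹ * ∑ k ∈ Finset.range (n + 1), statIter p z₀ k w

lemma exists_stationary (hp : ∀ x y, 0 ≤ p x y) (hrow : ∀ x, ∑ y, p x y = 1) (z₀ : S) :
    ∃ π : S → ℝ, (∀ w, 0 ≤ π w) ∧ (∑ w, π w = 1) ∧
      (∀ w, ∑ v, π v * p v w = π w) ∧ (∀ w, π w ≠ 0 → Reaches p z₀ w) := by
  have hinvpos : ∀ n : ℕ, (0 : ℝ) < ((n : ℝ) + 1)⁻¹ := fun n => by positivity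
  have hmem : ∀ n, ces p z₀ n ∈ Set.Icc (0 : S → ℝ) 1 := by
    intro n
    constructor
    · intro w
      exact mul_nonneg (le_of_lt (hinvpos n))
        (Finset.sum_nonneg fun k _ => statIter_nonneg p hp z₀ k w)
    · intro w
      show ((n : ℝ) + 1)⁻¹ * ∑ k ∈ Finset.range (n + 1), statIter p z₀ k w ≤ 1
      have hb : ∑ k ∈ Finset.range (n + 1), statIter p z₀ k w ≤ (n : ℝ) + 1 := by
        calc ∑ k ∈ Finset.range (n + 1), statIter p z₀ k w
            ≤ ∑ k ∈ Finset.range (n + 1), (1 : ℝ) :=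
              Finset.sum_le_sum fun k _ => statIter_le_one p hp hrow z₀ k w
          _ = (n : ℝ) + 1 := by simp
      calc ((n : ℝ) + 1)⁻¹ * ∑ k ∈ Finset.range (n + 1), statIter p z₀ k w
          ≤ ((n : ℝ) + 1)⁻¹ * ((n : ℝ) + 1) :=
            mul_le_mul_of_nonneg_left hb (le_of_lt (hinvpos n))
        _ = 1 := inv_mul_cancel₀ (by positivity)
  obtain ⟨π, hπmem, φ, hφmono, hφtend⟩ := (isCompact_Icc (α := S → ℝ)).tendsto_subseq hmem
  have htendw : ∀ w, Filter.Tendsto (fun n => ces p z₀ (φ n) w) Filter.atTop (nhds (π w)) :=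
    fun w => ((continuous_apply w).tendsto π).comp hφtend
  have hces_sum : ∀ n, ∑ w, ces p z₀ n w = 1 := by
    intro n
    show ∑ w, ((n : ℝ) + 1)⁻¹ * ∑ k ∈ Finset.range (n + 1), statIter p z₀ k w = 1
    rw [← Finset.mul_sum, Finset.sum_comm]
    have : ∑ k ∈ Finset.range (n + 1), ∑ w, statIter p z₀ k w = (n : ℝ) + 1 := by
      calc ∑ k ∈ Finset.range (n + 1), ∑ w, statIter p z₀ k w
          = ∑ k ∈ Finset.range (n + 1), (1 : ℝ) :=
            Finset.sum_congr rfl fun k _ => statIter_sum p hrow z₀ k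
        _ = (n : ℝ) + 1 := by simp
    rw [this, inv_mul_cancel₀ (by positivity)]
  refine ⟨π, fun w => hπmem.1 w, ?_, ?_, ?_⟩
  · have h1 : Filter.Tendsto (fun n => ∑ w, ces p z₀ (φ n) w) Filter.atTop
        (nhds (∑ w, π w)) := tendsto_finset_sum _ fun w _ => htendw w
    have h2 : (fun n => ∑ w, ces p z₀ (φ n) w) = fun _ => (1 : ℝ) := by
      funext n; exact hces_sum (φ n)
    rw [h2] at h1
    exact (tendsto_nhds_unique tendsto_const_nhds h1).symm
  · intro w
    have hA : Filter.Tendsto (fun n => ∑ v, ces p z₀ (φ n) v * p v w) Filter.atTop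
        (nhds (∑ v, π v * p v w)) :=
      tendsto_finset_sum _ fun v _ => (htendw v).mul_const _
    have hB : ∀ n, ∑ v, ces p z₀ n v * p v w
        = ces p z₀ n w + ((n : ℝ) + 1)⁻¹ * (statIter p z₀ (n + 1) w - statIter p z₀ 0 w) := by
      intro n
      have hswap : ∑ v, ces p z₀ n v * p v w
          = ((n : ℝ) + 1)⁻¹ * ∑ k ∈ Finset.range (n + 1), statIter p z₀ (k + 1) w := by
        show ∑ v, (((n : ℝ) + 1)⁻¹ * ∑ k ∈ Finset.range (n + 1), statIter p z₀ k v) * p v w = _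
        have : ∀ v, (((n : ℝ) + 1)⁻¹ * ∑ k ∈ Finset.range (n + 1), statIter p z₀ k v) * p v w
            = ((n : ℝ) + 1)⁻¹ * ∑ k ∈ Finset.range (n + 1), statIter p z₀ k v * p v w := by
          intro v; rw [mul_assoc, ← Finset.sum_mul]
        rw [Finset.sum_congr rfl fun v _ => this v, ← Finset.mul_sum, Finset.sum_comm]
        rfl
      rw [hswap]
      have hshift : ∑ k ∈ Finset.range (n + 1), statIter p z₀ (k + 1) w
          = ∑ k ∈ Finset.range (n + 1), statIter p z₀ k w
            + (statIter p z₀ (n + 1) w - statIter p z₀ 0 w) := by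
        have e1 : ∑ k ∈ Finset.range (n + 2), statIter p z₀ k w
            = ∑ k ∈ Finset.range (n + 1), statIter p z₀ (k + 1) w + statIter p z₀ 0 w :=
          Finset.sum_range_succ' _ _
        have e2 : ∑ k ∈ Finset.range (n + 2), statIter p z₀ k w
            = ∑ k ∈ Finset.range (n + 1), statIter p z₀ k w + statIter p z₀ (n + 1) w :=
          Finset.sum_range_succ _ _
        linarith
      rw [hshift]
      show ((n : ℝ) + 1)⁻¹ * _ = ((n : ℝ) + 1)⁻¹ * _ + ((n : ℝ) + 1)⁻¹ * _
      ring
    have herr : Filter.Tendsto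
        (fun n => ((φ n : ℝ) + 1)⁻¹ * (statIter p z₀ (φ n + 1) w - statIter p z₀ 0 w))
        Filter.atTop (nhds 0) := by
      have hg : Filter.Tendsto (fun n : ℕ => 2 * ((n : ℝ) + 1)⁻¹) Filter.atTop (nhds 0) := by
        have := tendsto_one_div_add_atTop_nhds_zero_nat (𝕜 := ℝ)
        have h2 := this.const_mul (2 : ℝ)
        simpa [one_div, mul_zero] using h2
      have hgφ : Filter.Tendsto (fun n => 2 * ((φ n : ℝ) + 1)⁻¹) Filter.atTop (nhds 0) :=
        hg.comp (hφmono.tendsto_atTop)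
      refine squeeze_zero_norm (fun n => ?_) hgφ
      have hb1 : |statIter p z₀ (φ n + 1) w - statIter p z₀ 0 w| ≤ 2 := by
        have i1 := statIter_nonneg p hp z₀ (φ n + 1) w
        have i2 := statIter_nonneg p hp z₀ 0 w
        have i3 := statIter_le_one p hp hrow z₀ (φ n + 1) w
        have i4 := statIter_le_one p hp hrow z₀ 0 w
        rw [abs_le]; constructor <;> linarith
      have hb2 : (0 : ℝ) < (φ n : ℝ) + 1 := by positivity
      rw [Real.norm_eq_abs, abs_mul, abs_of_pos (inv_pos.mpr hb2)]
      calc ((φ n : ℝ) + 1)⁻¹ * |statIter p z₀ (φ n + 1) w - statIter p z₀ 0 w|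
          ≤ ((φ n : ℝ) + 1)⁻¹ * 2 :=
            mul_le_mul_of_nonneg_left hb1 (le_of_lt (inv_pos.mpr hb2))
        _ = 2 * ((φ n : ℝ) + 1)⁻¹ := by ring
    have hC : Filter.Tendsto (fun n => ∑ v, ces p z₀ (φ n) v * p v w) Filter.atTop
        (nhds (π w)) := by
      have := (htendw w).add herr
      rw [add_zero] at this
      refine Filter.Tendsto.congr (fun n => (hB (φ n)).symm) this
    exact tendsto_nhds_unique hA hC
  · intro w hw
    by_contra hreach
    have hz : ∀ n, ces p z₀ n w = 0 := by
      intro n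
      show ((n : ℝ) + 1)⁻¹ * ∑ k ∈ Finset.range (n + 1), statIter p z₀ k w = 0
      rw [Finset.sum_eq_zero, mul_zero]
      intro k _
      by_contra h0
      exact hreach (statIter_reach p hp z₀ k w h0)
    have h1 : Filter.Tendsto (fun n => ces p z₀ (φ n) w) Filter.atTop (nhds 0) := by
      refine Filter.Tendsto.congr (fun n => (hz (φ n)).symm) tendsto_const_nhds
    exact hw (tendsto_nhds_unique (htendw w) h1)

end Cesaro

lemma converse_stationary (hp : ∀ x y, 0 ≤ p x y) (hrow : ∀ x, ∑ y, p x y = 1)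
    (μ : S → ℝ) (hμ0 : ∀ v, 0 ≤ μ v) (hμ1 : ∑ v, μ v = 1)
    (hEss : ∀ x, 0 < μ x → EssentialState p x)
    (hBal : ∀ x y, μ x * hitBeforeReturn p x y = μ y * hitBeforeReturn p y x) :
    ∀ y, ∑ x, μ x * p x y = μ y := by
  intro y
  by_cases hex : ∃ z, 0 < μ z ∧ Reaches p z y
  · obtain ⟨z, hz, hzy⟩ := hex
    obtain ⟨π, hπ0, hπ1, hπstat, hπsupp⟩ := exists_stationary p hp hrow z
    have hπz : 0 < π z := by
      obtain ⟨w, hw⟩ : ∃ w, π w ≠ 0 := by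
        by_contra h
        push_neg at h
        rw [Finset.sum_eq_zero fun w _ => h w] at hπ1
        norm_num at hπ1
      have hwz : Reaches p w z := hEss z hz w (hπsupp w hw)
      exact pos_reaches p hp π hπ0 hπstat hwz ((hπ0 w).lt_of_ne (Ne.symm hw))
    have key : ∀ x, Reaches p z x → μ x * π z = μ z * π x := by
      intro x hzx
      rcases eq_or_ne x z with rfl | hne
      · ring
      · have hxz : Reaches p x z := hEss z hz x hzx
        have h1 : 0 < hs p ({z, x} : Set S) z x := hs_pos p hp hrow z x (Ne.symm hne) hzx
        have hbμ := hBal z x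
        have hbπ := balance_of_stationary p hp hrow π hπ0 hπstat z x
        rw [hitBeforeReturn_eq_hs p z x, hitBeforeReturn_eq_hs p x z,
          Set.pair_comm x z] at hbμ
        have hkey : hs p ({z, x} : Set S) z x * (μ z * π x - μ x * π z) = 0 := by
          linear_combination π x * hbμ - μ x * hbπ
        rcases mul_eq_zero.mp hkey with h | h
        · exact absurd h (ne_of_gt h1)
        · linarith
    have hpt : ∀ x, (μ x * p x y) * π z = (μ z * π x) * p x y := by
      intro x
      by_cases hzx : Reaches p z x
      · have := key x hzx
        calc (μ x * p x y) * π z = (μ x * π z) * p x y := by ring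
          _ = (μ z * π x) * p x y := by rw [this]
      · have hx0 : μ x * p x y = 0 := by
          rcases (hμ0 x).eq_or_lt with h0 | hxpos
          · rw [← h0, zero_mul]
          · rcases (hp x y).eq_or_lt with h0 | hpxy
            · rw [← h0, mul_zero]
            · exact absurd (hzy.trans (hEss x hxpos y (Relation.ReflTransGen.single hpxy)))
                hzx
        have hπx : π x = 0 := by
          by_contra h
          exact hzx (hπsupp x h)
        rw [hx0, hπx]
        ring
    have hsum : (∑ x, μ x * p x y) * π z = μ z * π y := by
      calc (∑ x, μ x * p x y) * π z = ∑ x, (μ x * p x y) * π z := Finset.sum_mul _ _ _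
        _ = ∑ x, (μ z * π x) * p x y := Finset.sum_congr rfl fun x _ => hpt x
        _ = μ z * ∑ x, π x * p x y := by
            rw [Finset.mul_sum]
            exact Finset.sum_congr rfl fun x _ => by ring
        _ = μ z * π y := by rw [hπstat y]
    have hy := key y hzy
    exact mul_right_cancel₀ (ne_of_gt hπz) (hsum.trans hy.symm)
  · push_neg at hex
    have hμy : μ y = 0 := by
      rcases (hμ0 y).eq_or_lt with h0 | hpos
      · exact h0.symm
      · exact absurd Relation.ReflTransGen.refl (hex y hpos)
    have hterm : ∀ x, μ x * p x y = 0 := by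
      intro x
      rcases (hμ0 x).eq_or_lt with h0 | hxpos
      · rw [← h0, zero_mul]
      · rcases (hp x y).eq_or_lt with h0 | hpxy
        · rw [← h0, mul_zero]
        · exact absurd (Relation.ReflTransGen.single hpxy : Reaches p x y) (hex x hxpos)
    rw [Finset.sum_eq_zero fun x _ => hterm x, hμy]

end MCaux

theorem stationary_iff_essential_support_and_balance
    {S : Type*} [Fintype S] (p : S → S → ℝ)
    (hp : ∀ x y, 0 ≤ p x y) (hrow : ∀ x, ∑ y, p x y = 1)
    (μ : S → ℝ) (hμ0 : ∀ x, 0 ≤ μ x) (hμ1 : ∑ x, μ x = 1) :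
    (∀ y, ∑ x, μ x * p x y = μ y) ↔
      ((∀ x, 0 < μ x → EssentialState p x) ∧
       ∀ x y, μ x * hitBeforeReturn p x y = μ y * hitBeforeReturn p y x) := by
  classical
  constructor
  · intro hstat
    refine ⟨fun x hx => MCaux.essential_of_stationary p hp hrow μ hμ0 hstat x hx,
      fun x y => ?_⟩
    rw [MCaux.hitBeforeReturn_eq_hs p x y, MCaux.hitBeforeReturn_eq_hs p y x,
      Set.pair_comm y x]
    exact MCaux.balance_of_stationary p hp hrow μ hμ0 hstat x y
  · rintro ⟨h1, h2⟩
    exact MCaux.converse_stationary p hp hrow μ hμ0 hμ1 h1 h2
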